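/- Let q be a prime power, m and d positive integers, and θ : F_{q^m} → M_m(F_q) an injective ring homomorphism. If γ_1, …, γ_d ∈ F_{q^m} are pairwise distinct, then the md×md matrix over F_q whose (s,t)-th m×m block (for s,t ∈ {1,…,d}) is θ(γ_s^{t−1}) is invertible. -/

import Mathlib

open Matrix

theorem stmt5 (q m d : ℕ) (hq : IsPrimePow q) (hm : 0 < m) (hd : 0 < d)
    (F K : Type*) [Field F] [Field K] [Fintype F] [Fintype K]
    (hF : Fintype.card F = q) (hK : Fintype.card K = q ^ m)
    (θ : K →+* Matrix (Fin m) (Fin m) F) (hθ : Function.Injective θ)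
    (γ : Fin d → K) (hγ : Function.Injective γ) :
    IsUnit (Matrix.of
      (fun p r : Fin d × Fin m => θ (γ p.1 ^ (r.1 : ℕ)) p.2 r.2)) := by
  have hV : IsUnit (Matrix.vandermonde γ) := by
    rw [Matrix.isUnit_iff_isUnit_det, isUnit_iff_ne_zero]
    exact (Matrix.det_vandermonde_ne_zero_iff).2 hγ
  have := hV.map
    ((Matrix.compRingEquiv (Fin d) (Fin m) F).toRingHom.comp θ.mapMatrix)
  convert this using 1
  ext p r
  rfl
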